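/- Let E be a real Banach space, let (S(t))_{t≥0} be a C₀-semigroup on E, and let 𝓚 ⊆ E be a nonempty closed convex set which is semigroup invariant, i.e., S(t)(𝓚) ⊆ 𝓚 for every t ≥ 0. Then for every x ∈ 𝓚 one has T_𝓚(x) ⊆ T^A_𝓚(x), where T_𝓚(x) := closure(⋃_{h>0} {h⁻¹ • (k − x) : k ∈ 𝓚}) and T^A_𝓚(x) := {v ∈ E : liminf_{t→0⁺} d(S(t)x + t•v, 𝓚)/t = 0}. -/

import Mathlib

open Filter Metric Set Topology

/-- If `(S(t))_{t ≥ 0}` is a `C₀`-semigroup on a real Banach space leaving a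
nonempty closed convex set `𝓚` invariant, then for every `x ∈ 𝓚` the tangent cone
`T_𝓚(x) = cl (⋃_{h>0} h⁻¹ • (𝓚 - x))` is contained in the Pavel tangent cone
`T^A_𝓚(x) = {v | liminf_{t→0⁺} d(S(t)x + t•v, 𝓚)/t = 0}`. -/
theorem tangent_cone_subset_pavel_cone
    {E : Type*} [NormedAddCommGroup E] [NormedSpace ℝ E] [CompleteSpace E]
    (S : ℝ → E →L[ℝ] E)
    (hS0 : S 0 = ContinuousLinearMap.id ℝ E)
    (hSadd : ∀ s t : ℝ, 0 ≤ s → 0 ≤ t → S (t + s) = (S t).comp (S s))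
    (hScont : ∀ x : E, ContinuousOn (fun t => S t x) (Set.Ici (0:ℝ)))
    (𝓚 : Set E) (hne : 𝓚.Nonempty) (hcl : IsClosed 𝓚) (hconv : Convex ℝ 𝓚)
    (hinv : ∀ t : ℝ, 0 ≤ t → ∀ x ∈ 𝓚, S t x ∈ 𝓚)
    (x : E) (hx : x ∈ 𝓚) :
    closure (⋃ h ∈ Set.Ioi (0:ℝ), (fun k => h⁻¹ • (k - x)) '' 𝓚) ⊆
      {v : E | Filter.liminf (fun t : ℝ => Metric.infDist (S t x + t • v) 𝓚 / t)
        (nhdsWithin 0 (Set.Ioi 0)) = 0} := by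
  intro v hv
  set l : Filter ℝ := nhdsWithin 0 (Set.Ioi 0) with hl
  have hfpos : ∀ w : E, ∀ᶠ t in l, 0 ≤ Metric.infDist (S t x + t • w) 𝓚 / t := by
    intro w
    filter_upwards [self_mem_nhdsWithin] with t ht
    exact div_nonneg Metric.infDist_nonneg (le_of_lt ht)
  -- for elements of the (pre-closure) union, the quotient tends to 0
  have key : ∀ w ∈ (⋃ h ∈ Set.Ioi (0:ℝ), (fun k => h⁻¹ • (k - x)) '' 𝓚),
      Filter.Tendsto (fun t : ℝ => Metric.infDist (S t x + t • w) 𝓚 / t) l (𝓝 0) := by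
    intro w hw
    simp only [Set.mem_iUnion, Set.mem_image, Set.mem_Ioi, exists_prop] at hw
    obtain ⟨h, hh, k, hk, rfl⟩ := hw
    have hbound : ∀ᶠ t in l,
        Metric.infDist (S t x + t • (h⁻¹ • (k - x))) 𝓚 / t
          ≤ h⁻¹ * ‖(k - x) - S t (k - x)‖ := by
      have hIoc : Set.Ioc (0:ℝ) h ∈ l := Ioc_mem_nhdsGT_of_mem ⟨le_refl 0, hh⟩
      filter_upwards [hIoc] with t ht
      obtain ⟨ht0, hth⟩ := ht
      set b : ℝ := t / h with hb
      have hb0 : 0 ≤ b := div_nonneg ht0.le hh.le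
      have hb1 : b ≤ 1 := (div_le_one hh).mpr hth
      have hkt : x + b • (k - x) ∈ 𝓚 := by
        have hmem := hconv hx hk (by linarith : (0:ℝ) ≤ 1 - b) hb0 (by ring)
        convert hmem using 1
        module
      have hmem2 : S t (x + b • (k - x)) ∈ 𝓚 := hinv t ht0.le _ hkt
      have hle : Metric.infDist (S t x + t • (h⁻¹ • (k - x))) 𝓚
          ≤ ‖(S t x + t • (h⁻¹ • (k - x))) - S t (x + b • (k - x))‖ := by
        have h0 := Metric.infDist_le_dist_of_mem (x := S t x + t • (h⁻¹ • (k - x))) hmem2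
        rwa [dist_eq_norm] at h0
      have heq : (S t x + t • (h⁻¹ • (k - x))) - S t (x + b • (k - x))
          = b • ((k - x) - S t (k - x)) := by
        have htb : t • (h⁻¹ • (k - x)) = b • (k - x) := by
          rw [smul_smul, hb, div_eq_mul_inv]
        rw [htb, map_add, map_smul]
        abel_nf
        module
      rw [heq] at hle
      have hnorm : ‖b • ((k - x) - S t (k - x))‖ = b * ‖(k - x) - S t (k - x)‖ := by
        rw [norm_smul, Real.norm_eq_abs, abs_of_nonneg hb0]
      rw [hnorm] at hle
      calc Metric.infDist (S t x + t • (h⁻¹ • (k - x))) 𝓚 / t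
          ≤ b * ‖(k - x) - S t (k - x)‖ / t := by
            exact div_le_div_of_nonneg_right hle ht0.le |>.trans_eq rfl
        _ = h⁻¹ * ‖(k - x) - S t (k - x)‖ := by
            rw [hb]; field_simp
    -- the bounding function tends to 0
    have hScont0 : Filter.Tendsto (fun t : ℝ => S t (k - x)) l (𝓝 (k - x)) := by
      have := (hScont (k - x) 0 (Set.self_mem_Ici)).tendsto
      have h2 : l ≤ nhdsWithin (0:ℝ) (Set.Ici 0) :=
        nhdsWithin_mono 0 Set.Ioi_subset_Ici_self
      have h3 := this.mono_left h2
      simpa [hS0] using h3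
    have hg : Filter.Tendsto (fun t : ℝ => h⁻¹ * ‖(k - x) - S t (k - x)‖) l (𝓝 0) := by
      have h4 : Filter.Tendsto (fun t : ℝ => (k - x) - S t (k - x)) l
          (𝓝 ((k - x) - (k - x))) :=
        Filter.Tendsto.sub (tendsto_const_nhds (α := ℝ) (x := k - x)) hScont0
      have h5 := h4.norm
      simp only [sub_self, norm_zero] at h5
      simpa using h5.const_mul h⁻¹
    exact squeeze_zero' (hfpos _) hbound hg
  -- now the general case
  have hbdd : l.IsBoundedUnder (· ≥ ·) (fun t => Metric.infDist (S t x + t • v) 𝓚 / t) :=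
    ⟨0, by simpa [Filter.eventually_map] using hfpos v⟩
  have hev : ∀ ε : ℝ, 0 < ε → ∀ᶠ t in l, Metric.infDist (S t x + t • v) 𝓚 / t ≤ ε := by
    intro ε hε
    obtain ⟨w, hwU, hwd⟩ := Metric.mem_closure_iff.mp hv (ε / 2) (half_pos hε)
    have hev : ∀ᶠ t in l, Metric.infDist (S t x + t • v) 𝓚 / t ≤ ε := by
      have h1 : ∀ᶠ t in l, Metric.infDist (S t x + t • w) 𝓚 / t < ε / 2 :=
        (key w hwU).eventually (gt_mem_nhds (half_pos hε))
      filter_upwards [h1, self_mem_nhdsWithin] with t htw ht0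
      have ht0 : (0:ℝ) < t := ht0
      have hstep : Metric.infDist (S t x + t • v) 𝓚
          ≤ Metric.infDist (S t x + t • w) 𝓚 + t * dist v w := by
        have := Metric.infDist_le_infDist_add_dist
          (x := S t x + t • v) (y := S t x + t • w) (s := 𝓚)
        have hd : dist (S t x + t • v) (S t x + t • w) = t * dist v w := by
          rw [dist_add_left, dist_eq_norm, dist_eq_norm, ← smul_sub, norm_smul,
            Real.norm_eq_abs, abs_of_pos ht0]
        linarith [this, hd.le, hd.ge]
      have : Metric.infDist (S t x + t • v) 𝓚 / t
          ≤ Metric.infDist (S t x + t • w) 𝓚 / t + dist v w := by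
        rw [div_add' _ _ _ ht0.ne']
        exact div_le_div_of_nonneg_right (by linarith) ht0.le
      linarith
    exact hev
  refine le_antisymm ?_ ?_
  · refine le_of_forall_pos_le_add fun ε hε => ?_
    rw [zero_add]
    exact Filter.liminf_le_of_frequently_le (hev ε hε).frequently hbdd
  · exact Filter.le_liminf_of_le
      (Filter.isCoboundedUnder_ge_of_eventually_le l (hev 1 one_pos)) (hfpos v)
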